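/- Let F_q be a finite field, a ∈ F_q^× an element of multiplicative order at least n, b ∈ F_q, and let n, r be integers with 0 ≤ r < n. For 0 ≤ j ≤ r set c_j = Σ_{m=j}^{r} C(m,j) b^{m−j} ∈ F_q, and assume c_j ≠ 0 for all 0 ≤ j ≤ r. Set G(z) = ( Σ_{i=0}^{r} (z+b)^i, Σ_{i=0}^{r} (az+b)^i, Σ_{i=0}^{r} (a^2 z+b)^i, …, Σ_{i=0}^{r} (a^{n−1} z+b)^i ) ∈ F_q[z]^n. Then G(z) is a canonical (basic and minimal) generator matrix of the one-dimensional convolutional code C = F_q(z)·G(z) ⊆ F_q(z)^n, C has degree r, and the free distance of C equals n(r+1); hence C is an MDS convolutional code with parameters (n, 1, r). -/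

import Mathlib

set_option maxHeartbeats 1000000
set_option synthInstance.maxHeartbeats 400000
open Polynomial Finset

namespace CGCaux

variable {F : Type*} [Field F]

def cval (b : F) (r j : ℕ) : F := ∑ m ∈ Finset.Icc j r, (m.choose j : F) * b ^ (m - j)

section Coeff

lemma cval_eq_zero {b : F} {r j : ℕ} (h : r < j) : cval b r j = 0 := by
  rw [cval, Finset.Icc_eq_empty (by omega), Finset.sum_empty]

lemma coeff_sum_pow (α b : F) (hα : α ≠ 0) (r j : ℕ) :
    (∑ i ∈ Finset.range (r + 1), (C α * X + C b) ^ i).coeff j = α ^ j * cval b r j := by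
  have key : ∀ i : ℕ, (C α * X + C b) ^ i = C (α ^ i) * (X + C (b * α⁻¹)) ^ i := by
    intro i
    rw [C_pow, ← mul_pow]
    congr 1
    rw [mul_add, ← C_mul]
    congr 1
    field_simp
  simp only [key]
  rw [finset_sum_coeff]
  simp only [coeff_C_mul, coeff_X_add_C_pow]
  have hsub : Finset.Icc j r ⊆ Finset.range (r + 1) := by
    intro m hm
    rw [Finset.mem_Icc] at hm
    rw [Finset.mem_range]
    omega
  rw [← Finset.sum_subset hsub (by
    intro i hi hni
    rw [Finset.mem_range] at hi
    rw [Finset.mem_Icc] at hni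
    have hij : i < j := by omega
    rw [Nat.choose_eq_zero_of_lt hij]
    push_cast
    ring)]
  rw [cval, Finset.mul_sum]
  apply Finset.sum_congr rfl
  intro i hi
  rw [Finset.mem_Icc] at hi
  have hpow : α ^ i = α ^ j * α ^ (i - j) := by
    rw [← pow_add]
    congr 1
    omega
  have hne : α ^ (i - j) ≠ 0 := pow_ne_zero _ hα
  rw [hpow, mul_pow, inv_pow]
  field_simp

end Coeff
section Comb

variable (n r : ℕ)

/-- window of support S at time t -/
def wnd (S : Finset ℕ) (t : ℕ) : Finset ℕ := S ∩ Finset.Icc (t - r) t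

def mxw (S : Finset ℕ) (t : ℕ) : ℕ := (wnd r S t).sup id

noncomputable def mnw (S : Finset ℕ) (t : ℕ) : ℕ := sInf (wnd r S t : Set ℕ)

def Tset (S : Finset ℕ) : Finset ℕ := S.biUnion (fun s => Finset.Icc s (s + r))

noncomputable def ctb (S : Finset ℕ) (t : ℕ) : ℕ := n - (mxw r S t - mnw r S t)

lemma mem_wnd {S : Finset ℕ} {t s : ℕ} : s ∈ wnd r S t ↔ s ∈ S ∧ t - r ≤ s ∧ s ≤ t := by
  simp [wnd, Finset.mem_inter, Finset.mem_Icc, and_assoc]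

lemma mem_Tset {S : Finset ℕ} {t : ℕ} : t ∈ Tset r S ↔ (wnd r S t).Nonempty := by
  simp only [Tset, Finset.mem_biUnion, Finset.mem_Icc, Finset.Nonempty]
  constructor
  · rintro ⟨s, hs, h1, h2⟩
    exact ⟨s, (mem_wnd r).2 ⟨hs, by omega, by omega⟩⟩
  · rintro ⟨s, hs⟩
    rw [mem_wnd] at hs
    exact ⟨s, hs.1, by omega, by omega⟩

lemma mxw_mem {S : Finset ℕ} {t : ℕ} (h : (wnd r S t).Nonempty) : mxw r S t ∈ wnd r S t := by
  obtain ⟨i, hi, he⟩ := Finset.exists_mem_eq_sup _ h (id : ℕ → ℕ)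
  rw [mxw, he]; exact hi

lemma mnw_mem {S : Finset ℕ} {t : ℕ} (h : (wnd r S t).Nonempty) : mnw r S t ∈ wnd r S t := by
  have := Nat.sInf_mem (s := (wnd r S t : Set ℕ)) (by exact_mod_cast h.to_set)
  exact_mod_cast this

lemma le_mxw {S : Finset ℕ} {t s : ℕ} (h : s ∈ wnd r S t) : s ≤ mxw r S t :=
  Finset.le_sup (f := id) h

lemma mnw_le {S : Finset ℕ} {t s : ℕ} (h : s ∈ wnd r S t) : mnw r S t ≤ s :=
  Nat.sInf_le (by exact_mod_cast h)

lemma comb (hrn : r < n) : ∀ S : Finset ℕ, S.Nonempty →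
    n * (r + 1) ≤ ∑ t ∈ Tset r S, ctb n r S t := by
  intro S
  induction S using Finset.strongInductionOn with
  | _ S ih =>
  intro hS
  set E := S.max' hS with hE
  have hES : E ∈ S := S.max'_mem hS
  have hSle : ∀ s ∈ S, s ≤ E := fun s hs => S.le_max' s hs
  by_cases hS' : (S.erase E).Nonempty
  case neg =>
    -- S = {E}
    have hSsing : S = {E} := by
      apply Finset.eq_singleton_iff_unique_mem.2
      refine ⟨hES, fun s hs => ?_⟩
      by_contra h
      exact hS' ⟨s, Finset.mem_erase.2 ⟨h, hs⟩⟩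
    rw [hSsing]
    have hT : Tset r {E} = Finset.Icc E (E + r) := Finset.singleton_biUnion
    rw [hT]
    have hc : ∀ t ∈ Finset.Icc E (E + r), ctb n r {E} t = n := by
      intro t ht
      rw [Finset.mem_Icc] at ht
      have hw : wnd r {E} t = {E} := by
        ext s
        rw [mem_wnd, Finset.mem_singleton]
        constructor
        · rintro ⟨h1, _, _⟩; exact h1
        · rintro rfl; exact ⟨rfl, by omega, by omega⟩
      have h1 : mxw r {E} t = E := by rw [mxw, hw]; simp
      have h2 : mnw r {E} t = E := by
        have := mnw_mem r (t := t) (S := ({E} : Finset ℕ)) (by rw [hw]; exact ⟨E, Finset.mem_singleton_self E⟩)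
        rw [hw, Finset.mem_singleton] at this
        exact this
      rw [ctb, h1, h2]; omega
    rw [Finset.sum_congr rfl hc, Finset.sum_const, Nat.card_Icc, smul_eq_mul]
    have : E + r + 1 - E = r + 1 := by omega
    rw [this, Nat.mul_comm]
  case pos =>
    set S' := S.erase E with hS'def
    set E' := S'.max' hS' with hE'
    have hE'S' : E' ∈ S' := S'.max'_mem hS'
    have hS'le : ∀ s ∈ S', s ≤ E' := fun s hs => S'.le_max' s hs
    have hS'S : S' ⊆ S := Finset.erase_subset _ _
    have hE'E : E' < E := by
      have h1 : E' ≤ E := hSle E' (hS'S hE'S')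
      have h2 : E' ≠ E := (Finset.mem_erase.1 hE'S').1
      omega
    have hmemS' : ∀ s ∈ S, s ≠ E → s ∈ S' := fun s hs h => Finset.mem_erase.2 ⟨h, hs⟩
    have IH := ih S' (Finset.erase_ssubset hES) hS'
    -- subset fact
    have Tsub : Tset r S' ⊆ Tset r S :=
      Finset.biUnion_subset_biUnion_of_subset_left _ hS'S
    have hTle : ∀ t ∈ Tset r S', t ≤ E' + r := by
      intro t ht
      obtain ⟨s, hs⟩ := (mem_Tset r).1 ht
      rw [mem_wnd] at hs
      have := hS'le s hs.1
      omega
    -- the new interval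
    set newset : Finset ℕ := Finset.Icc (max E (E' + r + 1)) (E + r) with hnew
    have hnewsub : ∀ t ∈ newset, t ∈ Tset r S ∧ t ∉ Tset r S' := by
      intro t ht
      rw [hnew, Finset.mem_Icc] at ht
      constructor
      · exact (mem_Tset r).2 ⟨E, (mem_wnd r).2 ⟨hES, by omega, by omega⟩⟩
      · intro hmem
        have := hTle t hmem
        omega
    have hnewctb : ∀ t ∈ newset, ctb n r S t = n := by
      intro t ht
      rw [hnew, Finset.mem_Icc] at ht
      have hwE : E ∈ wnd r S t := (mem_wnd r).2 ⟨hES, by omega, by omega⟩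
      have huniq : ∀ s ∈ wnd r S t, s = E := by
        intro s hs
        rw [mem_wnd] at hs
        by_contra h
        have hsS' := hmemS' s hs.1 h
        have := hS'le s hsS'
        omega
      have h1 : mxw r S t = E := le_antisymm
        (Finset.sup_le fun s hs => le_of_eq (huniq s hs)) (le_mxw r hwE)
      have h2 : mnw r S t = E := huniq _ (mnw_mem r ⟨E, hwE⟩)
      rw [ctb, h1, h2]; omega
    -- comparing contributions on Tset S'
    have hcomp : ∀ t ∈ Tset r S', ctb n r S' t ≤ ctb n r S t + (if E ≤ t then E - E' else 0) := by
      intro t ht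
      have hwne' : (wnd r S' t).Nonempty := (mem_Tset r).1 ht
      by_cases hEt : E ≤ t
      case neg =>
        -- windows coincide
        have hw : wnd r S t = wnd r S' t := by
          ext s
          rw [mem_wnd, mem_wnd]
          constructor
          · rintro ⟨h1, h2, h3⟩
            exact ⟨hmemS' s h1 (by omega), h2, h3⟩
          · rintro ⟨h1, h2, h3⟩
            exact ⟨hS'S h1, h2, h3⟩
        simp only [if_neg hEt, ctb, mxw, mnw, hw, add_zero, le_refl]
      case pos =>
        have htle := hTle t ht
        have hE'w : E' ∈ wnd r S' t := (mem_wnd r).2 ⟨hE'S', by omega, by omega⟩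
        have hEw : E ∈ wnd r S t := (mem_wnd r).2 ⟨hES, by omega, by omega⟩
        have hmx' : mxw r S' t = E' := le_antisymm
          (Finset.sup_le fun s hs => hS'le s ((mem_wnd r).1 hs).1) (le_mxw r hE'w)
        have hmx : mxw r S t = E := le_antisymm
          (Finset.sup_le fun s hs => hSle s ((mem_wnd r).1 hs).1) (le_mxw r hEw)
        have hsub : wnd r S' t ⊆ wnd r S t := by
          intro s hs
          rw [mem_wnd] at hs ⊢
          exact ⟨hS'S hs.1, hs.2⟩
        have hmn : mnw r S t = mnw r S' t := by
          apply le_antisymm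
          · exact mnw_le r (hsub (mnw_mem r hwne'))
          · have hm := mnw_mem r (t := t) (S := S) ⟨E, hEw⟩
            rcases eq_or_ne (mnw r S t) E with h | h
            · have : mnw r S t ≤ E' := h ▸ mnw_le r (hsub hE'w)
              omega
            · have : mnw r S t ∈ wnd r S' t := by
                rw [mem_wnd] at hm ⊢
                exact ⟨hmemS' _ hm.1 h, hm.2⟩
              exact mnw_le r this
        have hm                                  := mnw_mem r hwne'
        rw [mem_wnd] at hm
        have hm1 : t - r ≤ mnw r S' t := hm.2.1
        have hm2 : mnw r S' t ≤ E' := hS'le _ hm.1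
        rw [if_pos hEt, ctb, ctb, hmx, hmx', hmn]
        omega
    -- cardinality facts
    have hfiltcard : ((Tset r S').filter (fun t => E ≤ t)).card ≤ E' + r + 1 - E := by
      have : (Tset r S').filter (fun t => E ≤ t) ⊆ Finset.Icc E (E' + r) := by
        intro t ht
        rw [Finset.mem_filter] at ht
        rw [Finset.mem_Icc]
        exact ⟨ht.2, hTle t ht.1⟩
      calc ((Tset r S').filter (fun t => E ≤ t)).card ≤ (Finset.Icc E (E' + r)).card :=
            Finset.card_le_card this
        _ = E' + r + 1 - E := by rw [Nat.card_Icc]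
    have hnewcard : newset.card = E + r + 1 - max E (E' + r + 1) := by
      rw [hnew, Nat.card_Icc]
    -- key numeric inequality
    have hkey : (E - E') * (E' + r + 1 - E) ≤ n * newset.card := by
      rw [hnewcard]
      by_cases hg : E ≤ E' + r + 1
      · rw [max_eq_right hg]
        calc (E - E') * (E' + r + 1 - E) ≤ (E - E') * n :=
              Nat.mul_le_mul_left _ (by omega)
          _ = n * (E - E') := Nat.mul_comm _ _
          _ ≤ n * (E + r + 1 - (E' + r + 1)) := Nat.mul_le_mul_left _ (by omega)
      · rw [max_eq_left (by omega)]
        have : E' + r + 1 - E = 0 := by omega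
        rw [this, Nat.mul_zero]
        exact Nat.zero_le _
    -- assemble
    have hdisj : Disjoint (Tset r S') newset := by
      rw [Finset.disjoint_right]
      intro t ht
      exact (hnewsub t ht).2
    have hunion : Tset r S' ∪ newset ⊆ Tset r S := by
      intro t ht
      rcases Finset.mem_union.1 ht with h | h
      · exact Tsub h
      · exact (hnewsub t h).1
    calc n * (r + 1) ≤ ∑ t ∈ Tset r S', ctb n r S' t := IH
      _ ≤ ∑ t ∈ Tset r S', (ctb n r S t + (if E ≤ t then E - E' else 0)) :=
          Finset.sum_le_sum hcomp
      _ = (∑ t ∈ Tset r S', ctb n r S t) + ∑ t ∈ Tset r S', (if E ≤ t then E - E' else 0) :=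
          Finset.sum_add_distrib
      _ = (∑ t ∈ Tset r S', ctb n r S t) +
            ((Tset r S').filter (fun t => E ≤ t)).card * (E - E') := by
          rw [← Finset.sum_filter, Finset.sum_const, smul_eq_mul]
      _ ≤ (∑ t ∈ Tset r S', ctb n r S t) + n * newset.card := by
          have : ((Tset r S').filter (fun t => E ≤ t)).card * (E - E') ≤ n * newset.card := by
            calc ((Tset r S').filter (fun t => E ≤ t)).card * (E - E')
                ≤ (E' + r + 1 - E) * (E - E') := Nat.mul_le_mul_right _ hfiltcard
              _ = (E - E') * (E' + r + 1 - E) := Nat.mul_comm _ _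
              _ ≤ n * newset.card := hkey
          omega
      _ = (∑ t ∈ Tset r S', ctb n r S t) + ∑ t ∈ newset, ctb n r S t := by
          rw [Finset.sum_congr rfl hnewctb, Finset.sum_const, smul_eq_mul, Nat.mul_comm]
      _ = ∑ t ∈ Tset r S' ∪ newset, ctb n r S t := (Finset.sum_union hdisj).symm
      _ ≤ ∑ t ∈ Tset r S, ctb n r S t := Finset.sum_le_sum_of_subset hunion

end Comb

section Bezout

lemma cval_zero (b : F) (r : ℕ) : cval b r 0 = ∑ i ∈ Finset.range (r + 1), b ^ i := by
  rw [cval, show Finset.Icc 0 r = Finset.range (r + 1) by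
    ext m; rw [Finset.mem_Icc, Finset.mem_range]; omega]
  simp

lemma card_le_of_pow_eq_one {K : Type*} [Field K] [DecidableEq K] (m : ℕ) (hm : 0 < m)
    (T : Finset K) (hT : ∀ x ∈ T, x ^ m = 1) : T.card ≤ m := by
  have hP : ((X : K[X]) ^ m - C 1) ≠ 0 := X_pow_sub_C_ne_zero hm 1
  have hsub : T ⊆ ((X : K[X]) ^ m - C 1).roots.toFinset := by
    intro x hx
    rw [Multiset.mem_toFinset, mem_roots hP]
    simp [IsRoot, hT x hx]
  calc T.card ≤ _ := Finset.card_le_card hsub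
    _ ≤ Multiset.card ((X : K[X]) ^ m - C 1).roots := Multiset.toFinset_card_le _
    _ ≤ ((X : K[X]) ^ m - C 1).natDegree := card_roots' _
    _ ≤ m := le_of_eq natDegree_X_pow_sub_C

lemma pow_inj_of_orderOf {a : F} (ha : a ≠ 0) {n : ℕ} (horder : n ≤ orderOf a)
    (k l : Fin n) (hkl : a ^ (k : ℕ) = a ^ (l : ℕ)) : k = l := by
  set au : Fˣ := Units.mk0 a ha with hau
  have hord : orderOf au = orderOf a := by rw [← orderOf_units]; simp [hau]
  have hk : (k : ℕ) ∈ Set.Iio (orderOf au) := by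
    rw [Set.mem_Iio, hord]; exact lt_of_lt_of_le k.2 horder
  have hl : (l : ℕ) ∈ Set.Iio (orderOf au) := by
    rw [Set.mem_Iio, hord]; exact lt_of_lt_of_le l.2 horder
  have hpow : au ^ (k : ℕ) = au ^ (l : ℕ) := by
    apply Units.ext
    simpa [hau] using hkl
  exact Fin.ext (pow_injOn_Iio_orderOf hk hl hpow)

lemma bezout [Fintype F] (n r : ℕ) (hrn : r < n)
    (a : F) (ha : a ≠ 0) (horder : n ≤ orderOf a) (b : F)
    (hc : ∀ j ≤ r, cval b r j ≠ 0)
    (Gpoly : Fin n → Polynomial F)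
    (hG : ∀ k : Fin n, Gpoly k =
      ∑ i ∈ Finset.range (r + 1), (C (a ^ (k : ℕ)) * X + C b) ^ i) :
    ∃ u : Fin n → Polynomial F, ∑ k, u k * Gpoly k = 1 := by
  classical
  suffices hsp : Ideal.span (Set.range Gpoly) = ⊤ by
    have h1 : (1 : Polynomial F) ∈ Ideal.span (Set.range Gpoly) := by
      rw [hsp]; trivial
    rwa [Ideal.mem_span_range_iff_exists_fun] at h1
  by_contra hne
  obtain ⟨M, hMmax, hle⟩ := Ideal.exists_le_maximal _ hne
  haveI : M.IsPrincipal := IsPrincipalIdealRing.principal M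
  set π : Polynomial F := Submodule.IsPrincipal.generator M with hπ
  have hGmem : ∀ k, Gpoly k ∈ M := fun k => hle (Ideal.subset_span ⟨k, rfl⟩)
  have hdvd : ∀ k, π ∣ Gpoly k := fun k =>
    (Submodule.IsPrincipal.mem_iff_generator_dvd M).1 (hGmem k)
  -- π is not a unit and π ≠ 0
  have hπnu : ¬ IsUnit π := by
    intro h
    exact hMmax.ne_top (M.eq_top_of_isUnit_mem
      (Submodule.IsPrincipal.generator_mem M) h)
  have hn0 : 0 < n := by omega
  -- Gpoly ⟨0,_⟩ ≠ 0 since its constant coefficient is cval b r 0 ≠ 0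
  have hGne : Gpoly ⟨0, hn0⟩ ≠ 0 := by
    intro h
    apply hc 0 (Nat.zero_le r)
    have := congrArg (fun p => Polynomial.eval 0 p) h
    simp only [hG, Polynomial.eval_zero] at this
    rw [cval_zero]
    simpa [Polynomial.eval_finset_sum] using this
  have hπ0 : π ≠ 0 := by
    intro h
    rcases hdvd ⟨0, hn0⟩ with ⟨q, hq⟩
    rw [h, zero_mul] at hq
    exact hGne hq
  have hdeg : π.degree ≠ 0 := fun h => hπnu (isUnit_iff_degree_eq_zero.2 h)
  -- pass to the algebraic closure
  set K := AlgebraicClosure F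
  have hdegK : (π.map (algebraMap F K)).degree ≠ 0 := by
    rwa [degree_map]
  obtain ⟨z0, hz0root⟩ := IsAlgClosed.exists_root _ hdegK
  have hroot : ∀ k, aeval z0 (Gpoly k) = 0 := by
    intro k
    rcases hdvd k with ⟨q, hq⟩
    rw [hq, map_mul]
    have : aeval z0 π = 0 := by
      rw [aeval_def, ← eval_map]
      exact hz0root
    rw [this, zero_mul]
  set w : Fin n → K := fun k => algebraMap F K (a ^ (k : ℕ)) * z0 + algebraMap F K b with hw
  have hsum : ∀ k, ∑ i ∈ Finset.range (r + 1), (w k) ^ i = 0 := by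
    intro k
    have := hroot k
    rw [hG] at this
    simpa [map_sum, hw] using this
  have hpow1 : ∀ k, (w k) ^ (r + 1) = 1 := by
    intro k
    have := congrArg (fun x => x * (w k - 1)) (hsum k)
    simp only [zero_mul, geom_sum_mul] at this
    have h1 : (w k) ^ (r + 1) - 1 = 0 := this
    linear_combination h1
  have hz0 : z0 ≠ 0 := by
    rintro rfl
    apply hc 0 (Nat.zero_le r)
    have := hsum ⟨0, hn0⟩
    simp only [hw, mul_zero, zero_add] at this
    rw [cval_zero]
    apply (algebraMap F K).injective
    rw [map_sum, map_zero]
    simpa using this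
  have hwinj : ∀ k l : Fin n, w k = w l → k = l := by
    intro k l hkl
    simp only [hw] at hkl
    have h3 : algebraMap F K (a ^ (k : ℕ)) * z0 = algebraMap F K (a ^ (l : ℕ)) * z0 := by
      linear_combination hkl
    have h2 := mul_right_cancel₀ hz0 h3
    exact pow_inj_of_orderOf ha horder k l ((algebraMap F K).injective h2)
  -- distinct roots counting
  by_cases hone : ∃ k, w k = 1
  case pos =>
    obtain ⟨k0, hk0⟩ := hone
    have hr1 : ((r + 1 : ℕ) : F) = 0 := by
      apply (algebraMap F K).injective
      rw [map_natCast, map_zero]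
      have := hsum k0
      rw [hk0] at this
      simpa using this
    set p := ringChar F with hpdef
    haveI : CharP F p := ringChar.charP F
    have hp : p.Prime := CharP.char_is_prime F p
    have hdvdp : p ∣ r + 1 := (CharP.cast_eq_zero_iff F p (r + 1)).1 hr1
    obtain ⟨m, hm⟩ := hdvdp
    have hm1 : 0 < m := by
      rcases Nat.eq_zero_or_pos m with h | h
      · subst h; omega
      · exact h
    have hmlt : m < n := by
      have h2m : 2 * m ≤ p * m := Nat.mul_le_mul_right m hp.two_le
      omega
    haveI : CharP K p := charP_of_injective_algebraMap (algebraMap F K).injective p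
    haveI : Fact p.Prime := ⟨hp⟩
    have hwm : ∀ k, (w k) ^ m = 1 := by
      intro k
      have h1 : ((w k) ^ m - 1) ^ p = 0 := by
        rw [sub_pow_char, ← pow_mul, one_pow]
        rw [show m * p = r + 1 by rw [Nat.mul_comm, ← hm]]
        rw [hpow1 k, sub_self]
      have h2 := pow_eq_zero_iff (n := p) hp.ne_zero |>.1 h1
      exact sub_eq_zero.1 h2
    have hcard := card_le_of_pow_eq_one m hm1 (Finset.image w Finset.univ)
      (by intro x hx; obtain ⟨k, _, rfl⟩ := Finset.mem_image.1 hx; exact hwm k)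
    rw [Finset.card_image_of_injective _ (fun k l => hwinj k l), Finset.card_univ,
      Fintype.card_fin] at hcard
    omega
  case neg =>
    push_neg at hone
    have hcard := card_le_of_pow_eq_one (r + 1) (by omega)
      (insert (1 : K) (Finset.image w Finset.univ)) ?_
    · rw [Finset.card_insert_of_notMem, Finset.card_image_of_injective _
        (fun k l => hwinj k l), Finset.card_univ, Fintype.card_fin] at hcard
      · omega
      · intro h
        obtain ⟨k, _, hk⟩ := Finset.mem_image.1 h
        exact hone k hk
    · intro x hx
      rcases Finset.mem_insert.1 hx with rfl | hx
      · exact one_pow _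
      · obtain ⟨k, _, rfl⟩ := Finset.mem_image.1 hx
        exact hpow1 k

end Bezout

section Weight

variable {F : Type*} [Field F] [Fintype F] [DecidableEq F]
variable {n r : ℕ} {a b : F}

lemma coeff_v_mul (ha : a ≠ 0) (v : Polynomial F) (k : Fin n) (t : ℕ) :
    (v * ∑ i ∈ Finset.range (r + 1), (C (a ^ (k : ℕ)) * X + C b) ^ i).coeff t =
      Polynomial.eval (a ^ (k : ℕ))
        (∑ s ∈ wnd r v.support t, C (v.coeff s * cval b r (t - s)) * X ^ (t - s)) := by
  rw [eval_finset_sum]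
  simp only [eval_mul, eval_C, eval_pow, eval_X]
  rw [coeff_mul, Finset.Nat.sum_antidiagonal_eq_sum_range_succ_mk]
  have hsub : wnd r v.support t ⊆ Finset.range (t + 1) := by
    intro s hs
    rw [mem_wnd] at hs
    rw [Finset.mem_range]
    omega
  rw [← Finset.sum_subset hsub (by
    intro s hs hns
    rw [Finset.mem_range] at hs
    rw [mem_wnd] at hns
    push_neg at hns
    rw [coeff_sum_pow _ _ (pow_ne_zero _ ha)]
    by_cases hsupp : s ∈ v.support
    · have h1 : s < t - r := by
        rcases Decidable.em (t - r ≤ s) with h | h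
        · exact absurd (hns hsupp h) (by omega)
        · omega
      rw [cval_eq_zero (by omega), mul_zero, mul_zero]
    · rw [Polynomial.notMem_support_iff.1 hsupp, zero_mul])]
  apply Finset.sum_congr rfl
  intro s hs
  rw [coeff_sum_pow _ _ (pow_ne_zero _ ha)]
  ring

lemma perT (hrn : r < n) (ha : a ≠ 0) (horder : n ≤ orderOf a)
    (hc : ∀ j ≤ r, cval b r j ≠ 0) (v : Polynomial F) (t : ℕ)
    (ht : (wnd r v.support t).Nonempty) :
    (∃ k : Fin n,
      (v * ∑ i ∈ Finset.range (r + 1), (C (a ^ (k : ℕ)) * X + C b) ^ i).coeff t ≠ 0) ∧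
    n - (mxw r v.support t - mnw r v.support t) ≤
      hammingNorm (fun k : Fin n =>
        (v * ∑ i ∈ Finset.range (r + 1), (C (a ^ (k : ℕ)) * X + C b) ^ i).coeff t) := by
  classical
  set S := v.support with hSdef
  set M := mxw r S t with hMdef
  set m := mnw r S t with hmdef
  have hMw : M ∈ wnd r S t := mxw_mem r ht
  have hmw : m ∈ wnd r S t := mnw_mem r ht
  have hMS : M ∈ S := ((mem_wnd r).1 hMw).1
  have hM1 : t - r ≤ M := ((mem_wnd r).1 hMw).2.1
  have hM2 : M ≤ t := ((mem_wnd r).1 hMw).2.2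
  have hm1 : t - r ≤ m := ((mem_wnd r).1 hmw).2.1
  have hm2 : m ≤ t := ((mem_wnd r).1 hmw).2.2
  have hmM : m ≤ M := mnw_le r hMw
  set Pt : Polynomial F := ∑ s ∈ wnd r S t, C (v.coeff s * cval b r (t - s)) * X ^ (t - s)
    with hPt
  have hdegPt : Pt.natDegree ≤ t - m := by
    apply Polynomial.natDegree_sum_le_of_forall_le
    intro s hs
    have hsm : m ≤ s := mnw_le r hs
    have hst : s ≤ t := ((mem_wnd r).1 hs).2.2
    calc (C (v.coeff s * cval b r (t - s)) * X ^ (t - s)).natDegree ≤ t - s :=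
          natDegree_C_mul_le _ _ |>.trans (by rw [natDegree_X_pow])
      _ ≤ t - m := by omega
  have hcoeffPt : Pt.coeff (t - M) = v.coeff M * cval b r (t - M) := by
    rw [hPt, finset_sum_coeff]
    rw [Finset.sum_eq_single_of_mem M hMw (by
      intro s hs hne
      have hst : s ≤ t := ((mem_wnd r).1 hs).2.2
      rw [coeff_C_mul, coeff_X_pow, if_neg (by omega), mul_zero])]
    rw [coeff_C_mul, coeff_X_pow, if_pos rfl, mul_one]
  have hPtne : Pt ≠ 0 := by
    intro h
    have h0 : Pt.coeff (t - M) = 0 := by rw [h, coeff_zero]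
    rw [hcoeffPt] at h0
    exact (mul_ne_zero (Polynomial.mem_support_iff.1 hMS) (hc _ (by omega))) h0
  have hdvd : (X : Polynomial F) ^ (t - M) ∣ Pt := by
    apply Finset.dvd_sum
    intro s hs
    have hsM : s ≤ M := le_mxw r hs
    exact Dvd.dvd.mul_left (pow_dvd_pow X (by omega)) _
  obtain ⟨Q, hQ⟩ := hdvd
  have hQne : Q ≠ 0 := by
    intro h
    rw [h, mul_zero] at hQ
    exact hPtne hQ
  have hdegQ : Q.natDegree ≤ M - m := by
    have h1 : Pt.natDegree = (t - M) + Q.natDegree := by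
      rw [hQ, natDegree_mul (pow_ne_zero _ X_ne_zero) hQne, natDegree_X_pow]
    omega
  set Z := Finset.univ.filter (fun k : Fin n => Polynomial.eval (a ^ (k : ℕ)) Pt = 0) with hZ
  have hZcard : Z.card ≤ M - m := by
    have hmapped : ∀ k ∈ Z, a ^ (k : ℕ) ∈ Q.roots.toFinset := by
      intro k hk
      rw [hZ, Finset.mem_filter] at hk
      rw [Multiset.mem_toFinset, mem_roots hQne]
      have h2 := hk.2
      rw [hQ, eval_mul, eval_pow, eval_X] at h2
      exact (mul_eq_zero.1 h2).resolve_left (pow_ne_zero _ (pow_ne_zero _ ha))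
    calc Z.card ≤ Q.roots.toFinset.card := by
          apply Finset.card_le_card_of_injOn _ hmapped
          intro k hk l hl hkl
          exact pow_inj_of_orderOf ha horder k l hkl
      _ ≤ Multiset.card Q.roots := Multiset.toFinset_card_le _
      _ ≤ Q.natDegree := card_roots' _
      _ ≤ M - m := hdegQ
  have hfun : (fun k : Fin n =>
      (v * ∑ i ∈ Finset.range (r + 1), (C (a ^ (k : ℕ)) * X + C b) ^ i).coeff t) =
      (fun k : Fin n => Polynomial.eval (a ^ (k : ℕ)) Pt) := by
    funext k
    rw [coeff_v_mul ha]
  have hcards : Z.card +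
      (Finset.univ.filter (fun k : Fin n => ¬ (Polynomial.eval (a ^ (k : ℕ)) Pt = 0))).card
      = n := by
    rw [hZ, Finset.card_filter_add_card_filter_not, Finset.card_univ, Fintype.card_fin]
  have hham : hammingNorm (fun k : Fin n =>
      (v * ∑ i ∈ Finset.range (r + 1), (C (a ^ (k : ℕ)) * X + C b) ^ i).coeff t) =
      (Finset.univ.filter (fun k : Fin n => ¬ (Polynomial.eval (a ^ (k : ℕ)) Pt = 0))).card := by
    rw [hfun]
    rfl
  constructor
  · have hpos : 0 < (Finset.univ.filter
        (fun k : Fin n => ¬ (Polynomial.eval (a ^ (k : ℕ)) Pt = 0))).card := by omega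
    obtain ⟨k, hk⟩ := Finset.card_pos.1 hpos
    rw [Finset.mem_filter] at hk
    refine ⟨k, ?_⟩
    rw [coeff_v_mul ha]
    exact hk.2
  · rw [hham]
    omega

lemma weight_lb (hrn : r < n) (ha : a ≠ 0) (horder : n ≤ orderOf a)
    (hc : ∀ j ≤ r, cval b r j ≠ 0) (v : Polynomial F) (hv : v ≠ 0)
    (x : Fin n → Polynomial F)
    (hx : ∀ k, x k = v * ∑ i ∈ Finset.range (r + 1), (C (a ^ (k : ℕ)) * X + C b) ^ i) :
    n * (r + 1) ≤
      ∑ t ∈ Finset.range ((Finset.univ.sup fun i => (x i).natDegree) + 1),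
        hammingNorm (fun i => (x i).coeff t) := by
  classical
  have hSne : v.support.Nonempty := Polynomial.support_nonempty.2 hv
  have hTsub : Tset r v.support ⊆
      Finset.range ((Finset.univ.sup fun i => (x i).natDegree) + 1) := by
    intro t ht
    obtain ⟨k, hk⟩ := (perT hrn ha horder hc v t ((mem_Tset r).1 ht)).1
    rw [Finset.mem_range]
    have h1 : t ≤ (x k).natDegree := le_natDegree_of_ne_zero (by rw [hx]; exact hk)
    have h2 : (x k).natDegree ≤ Finset.univ.sup fun i => (x i).natDegree :=
      Finset.le_sup (f := fun i => (x i).natDegree) (Finset.mem_univ k)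
    omega
  calc n * (r + 1) ≤ ∑ t ∈ Tset r v.support, ctb n r v.support t := comb n r hrn v.support hSne
    _ ≤ ∑ t ∈ Tset r v.support, hammingNorm (fun i => (x i).coeff t) := by
        apply Finset.sum_le_sum
        intro t ht
        have h2 := (perT hrn ha horder hc v t ((mem_Tset r).1 ht)).2
        rw [ctb]
        refine le_of_le_of_eq h2 ?_
        congr 1
        funext k
        rw [hx]
    _ ≤ _ := Finset.sum_le_sum_of_subset hTsub

end Weight

end CGCaux


/-- The vector of rational functions obtained from a vector of polynomials. -/
noncomputable def liftVec {F : Type*} [Field F] {n : ℕ} (x : Fin n → Polynomial F) :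
    Fin n → RatFunc F :=
  fun i => algebraMap (Polynomial F) (RatFunc F) (x i)

/-- The weight of a polynomial vector `x(z) = Σ_t x_t z^t` is `Σ_t w_H(x_t)`. -/
noncomputable def polyWeight {F : Type*} [Field F] [DecidableEq F] {n : ℕ}
    (x : Fin n → Polynomial F) : ℕ :=
  ∑ t ∈ Finset.range ((Finset.univ.sup fun i => (x i).natDegree) + 1),
    hammingNorm (fun i => (x i).coeff t)

theorem CGC_s_eq_zero_MDS
    {F : Type*} [Field F] [Fintype F] [DecidableEq F]
    (n r : ℕ) (hrn : r < n)
    -- a ∈ F_q^× has multiplicative order at least n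
    (a : F) (ha : a ≠ 0) (horder : n ≤ orderOf a)
    (b : F)
    -- c_j = Σ_{m=j}^{r} C(m,j) b^{m−j} ≠ 0 for all 0 ≤ j ≤ r
    (hc : ∀ j ≤ r, (∑ m ∈ Finset.Icc j r, (m.choose j : F) * b ^ (m - j)) ≠ 0)
    -- G(z) = ( Σ_{i=0}^{r} (z+b)^i , Σ_{i=0}^{r} (az+b)^i , … , Σ_{i=0}^{r} (a^{n−1}z+b)^i )
    (Gpoly : Fin n → Polynomial F)
    (hG : ∀ k : Fin n, Gpoly k =
      ∑ i ∈ Finset.range (r + 1),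
        (Polynomial.C (a ^ (k : ℕ)) * Polynomial.X + Polynomial.C b) ^ i) :
    -- G(z) is a generator matrix (rank 1) of C = F_q(z)·G(z) …
    Gpoly ≠ 0 ∧
    -- … which is basic: F_q[z]^n / (F_q[z]-row span of G) is free
    Module.Free (Polynomial F)
      ((Fin n → Polynomial F) ⧸ Submodule.span (Polynomial F) {Gpoly}) ∧
    -- … and canonical: its row degree is minimal among all polynomial generator matrices of C
    (∀ x : Fin n → Polynomial F, x ≠ 0 →
        Submodule.span (RatFunc F) {liftVec x} = Submodule.span (RatFunc F) {liftVec Gpoly} →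
        (Finset.univ.sup fun i => (Gpoly i).natDegree) ≤
          Finset.univ.sup fun i => (x i).natDegree) ∧
    -- C has degree r (the max degree of the 1×1 minors of the basic matrix G)
    (Finset.univ.sup fun i => (Gpoly i).natDegree) = r ∧
    -- the free distance of C equals n(r+1), the generalized Singleton bound for (n,1,r):
    -- hence C is an MDS convolutional code
    IsLeast { w : ℕ | ∃ x : Fin n → Polynomial F,
        liftVec x ∈ Submodule.span (RatFunc F) {liftVec Gpoly} ∧ x ≠ 0 ∧ polyWeight x = w }
      (n * (r + 1)) := by
  classical
  have hn0 : 0 < n := by omega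
  have hc' : ∀ j ≤ r, CGCaux.cval b r j ≠ 0 := hc
  obtain ⟨u, hu⟩ := CGCaux.bezout n r hrn a ha horder b hc' Gpoly hG
  have hGcoeff : ∀ (k : Fin n) (j : ℕ),
      (Gpoly k).coeff j = (a ^ (k : ℕ)) ^ j * CGCaux.cval b r j := by
    intro k j
    rw [hG]
    exact CGCaux.coeff_sum_pow _ _ (pow_ne_zero _ ha) r j
  have hdegG : ∀ k, (Gpoly k).natDegree = r := by
    intro k
    apply le_antisymm
    · exact natDegree_le_iff_coeff_eq_zero.2 fun N hN => by
        rw [hGcoeff k N, CGCaux.cval_eq_zero hN, mul_zero]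
    · exact le_natDegree_of_ne_zero (by
        rw [hGcoeff k r]
        exact mul_ne_zero (pow_ne_zero _ (pow_ne_zero _ ha)) (hc' r le_rfl))
  have hGne : ∀ k, Gpoly k ≠ 0 := by
    intro k h
    apply hc' 0 (Nat.zero_le r)
    have h2 := hGcoeff k 0
    rw [h, coeff_zero, pow_zero, one_mul] at h2
    exact h2.symm
  have h1 : Gpoly ≠ 0 := fun h => hGne ⟨0, hn0⟩ (congrFun h _)
  -- the Bezout functional
  set φ : (Fin n → Polynomial F) →ₗ[Polynomial F] Polynomial F :=
    { toFun := fun y => ∑ k, u k * y k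
      map_add' := by
        intro y z
        rw [← Finset.sum_add_distrib]
        apply Finset.sum_congr rfl
        intro k _
        simp [mul_add]
      map_smul' := by
        intro c y
        simp only [Pi.smul_apply, smul_eq_mul, RingHom.id_apply]
        rw [Finset.mul_sum]
        apply Finset.sum_congr rfl
        intro k _
        ring } with hφdef
  have hφG : φ Gpoly = 1 := hu
  have hφap : ∀ y, φ y = ∑ k, u k * y k := fun y => rfl
  -- factorization of members of the span
  have hfact : ∀ x : Fin n → Polynomial F,
      liftVec x ∈ Submodule.span (RatFunc F) {liftVec Gpoly} →
      ∃ v : Polynomial F, ∀ i, x i = v * Gpoly i := by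
    intro x hmem
    obtain ⟨f, hf⟩ := Submodule.mem_span_singleton.1 hmem
    have hfi : ∀ i, f * algebraMap (Polynomial F) (RatFunc F) (Gpoly i)
        = algebraMap (Polynomial F) (RatFunc F) (x i) := by
      intro i
      have h2 := congrFun hf i
      rw [Pi.smul_apply, smul_eq_mul] at h2
      exact h2
    refine ⟨∑ k, u k * x k, fun i => ?_⟩
    have hfeq : f = algebraMap (Polynomial F) (RatFunc F) (∑ k, u k * x k) := by
      calc f = f * algebraMap (Polynomial F) (RatFunc F) (∑ k, u k * Gpoly k) := by
            rw [hu, map_one, mul_one]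
        _ = algebraMap (Polynomial F) (RatFunc F) (∑ k, u k * x k) := by
            rw [map_sum, map_sum, Finset.mul_sum]
            apply Finset.sum_congr rfl
            intro k _
            rw [map_mul, map_mul, ← hfi k]
            ring
    apply IsFractionRing.injective (Polynomial F) (RatFunc F)
    rw [map_mul, ← hfeq]
    exact (hfi i).symm
  -- freeness
  have hfree : Module.Free (Polynomial F)
      ((Fin n → Polynomial F) ⧸ Submodule.span (Polynomial F) {Gpoly}) := by
    haveI : NoZeroSMulDivisors (Polynomial F)
        ((Fin n → Polynomial F) ⧸ Submodule.span (Polynomial F) {Gpoly}) := by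
      constructor
      intro c y hcy
      rcases eq_or_ne c 0 with rfl | hcne
      · exact Or.inl rfl
      right
      obtain ⟨x, rfl⟩ := Submodule.Quotient.mk_surjective _ y
      rw [← Submodule.Quotient.mk_smul, Submodule.Quotient.mk_eq_zero] at hcy
      obtain ⟨q, hq⟩ := Submodule.mem_span_singleton.1 hcy
      have h2 : q = c * φ x := by
        have h3 := congrArg φ hq
        rw [map_smul, map_smul, hφG] at h3
        simpa [smul_eq_mul] using h3
      have h4 : x = (φ x) • Gpoly := by
        funext i
        have h5 := congrFun hq i
        rw [Pi.smul_apply, Pi.smul_apply, smul_eq_mul, smul_eq_mul, h2] at h5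
        apply mul_left_cancel₀ hcne
        rw [← h5, Pi.smul_apply, smul_eq_mul]
        ring
      rw [Submodule.Quotient.mk_eq_zero]
      exact Submodule.mem_span_singleton.2 ⟨φ x, h4.symm⟩
    exact Module.free_of_finite_type_torsion_free'
  -- degree
  have hsup : (Finset.univ.sup fun i => (Gpoly i).natDegree) = r := by
    apply le_antisymm
    · exact Finset.sup_le fun i _ => (hdegG i).le
    · calc r = (Gpoly ⟨0, hn0⟩).natDegree := (hdegG _).symm
        _ ≤ _ := Finset.le_sup (f := fun i => (Gpoly i).natDegree) (Finset.mem_univ _)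
  -- minimality
  have hmin : ∀ x : Fin n → Polynomial F, x ≠ 0 →
      Submodule.span (RatFunc F) {liftVec x} = Submodule.span (RatFunc F) {liftVec Gpoly} →
      (Finset.univ.sup fun i => (Gpoly i).natDegree) ≤
        Finset.univ.sup fun i => (x i).natDegree := by
    intro x hx hspan
    have hmem : liftVec x ∈ Submodule.span (RatFunc F) {liftVec Gpoly} := by
      rw [← hspan]
      exact Submodule.mem_span_singleton_self _
    obtain ⟨v, hv⟩ := hfact x hmem
    have hvne : v ≠ 0 := by
      intro h
      apply hx
      funext i
      rw [Pi.zero_apply, hv i, h, zero_mul]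
    have hxi0 : (x ⟨0, hn0⟩).natDegree = v.natDegree + r := by
      rw [hv _, natDegree_mul hvne (hGne _), hdegG _]
    rw [hsup]
    calc r ≤ (x ⟨0, hn0⟩).natDegree := by omega
      _ ≤ _ := Finset.le_sup (f := fun i => (x i).natDegree) (Finset.mem_univ _)
  refine ⟨h1, hfree, hmin, hsup, ⟨⟨Gpoly, Submodule.mem_span_singleton_self _, h1, ?_⟩, ?_⟩⟩
  · -- polyWeight Gpoly = n * (r + 1)
    unfold polyWeight
    rw [hsup]
    have hterm : ∀ t ∈ Finset.range (r + 1),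
        hammingNorm (fun i : Fin n => (Gpoly i).coeff t) = n := by
      intro t ht
      rw [Finset.mem_range] at ht
      have hall : ∀ i : Fin n, (Gpoly i).coeff t ≠ 0 := fun i => by
        rw [hGcoeff]
        exact mul_ne_zero (pow_ne_zero _ (pow_ne_zero _ ha)) (hc' t (by omega))
      have hrw : hammingNorm (fun i : Fin n => (Gpoly i).coeff t)
          = (Finset.univ.filter (fun i : Fin n => (Gpoly i).coeff t ≠ 0)).card := rfl
      rw [hrw, Finset.filter_true_of_mem (fun i _ => hall i), Finset.card_univ,
        Fintype.card_fin]
    rw [Finset.sum_congr rfl hterm, Finset.sum_const, smul_eq_mul, Finset.card_range]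
    ring
  · -- lower bound
    rintro w ⟨x, hmem, hxne, rfl⟩
    obtain ⟨v, hv⟩ := hfact x hmem
    have hvne : v ≠ 0 := by
      intro h
      apply hxne
      funext i
      rw [Pi.zero_apply, hv i, h, zero_mul]
    have hx' : ∀ k, x k = v * ∑ i ∈ Finset.range (r + 1),
        (C (a ^ (k : ℕ)) * X + C b) ^ i := fun k => by rw [hv k, hG k]
    exact CGCaux.weight_lb hrn ha horder hc' v hvne x hx'
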